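/- Let G = (V,E) be a finite simple graph with degeneracy d and independence number α such that G contains no isolated vertices and no equivalent vertices, i.e., there is no edge {x,y} of G with N[x] = N[y]. If (C_1, …, C_k) is an edge clique cover of G, then d + α < 2^k. -/

import Mathlib

/-- An edge clique cover of a simple graph `G`: a finite indexed family of cliques
such that every edge of `G` has both endpoints in some member of the family. -/
def IsEdgeCliqueCover {V : Type*} (G : SimpleGraph V) {k : ℕ} (C : Fin k → Finset V) : Prop :=
  (∀ l, G.IsClique (C l : Set V)) ∧ ∀ ⦃x y : V⦄, G.Adj x y → ∃ l, x ∈ C l ∧ y ∈ C l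

/-- The degeneracy of `G`: the least `d` such that every nonempty set `S` of vertices
contains a vertex having at most `d` neighbours inside `S`. -/
noncomputable def degeneracy {V : Type*} [Fintype V] (G : SimpleGraph V) : ℕ :=
  sInf {d : ℕ | ∀ S : Finset V, S.Nonempty → ∃ v ∈ S, ((S : Set V) ∩ G.neighborSet v).ncard ≤ d}

/-- The independence number of `G`: the maximum size of a set of pairwise
non-adjacent vertices. -/
noncomputable def indepNum {V : Type*} [Fintype V] (G : SimpleGraph V) : ℕ :=
  sSup {n : ℕ | ∃ s : Finset V, s.card = n ∧ (s : Set V).Pairwise (fun x y => ¬ G.Adj x y)}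

/-- If a finite simple graph `G` with degeneracy `d` and independence number `α` has no
isolated vertices and no pair of adjacent vertices with equal closed neighbourhoods, then
any edge clique cover `(C_1, …, C_k)` of `G` satisfies `d + α < 2 ^ k`. -/
theorem degeneracy_add_indepNum_lt_two_pow {V : Type*} [Fintype V] (G : SimpleGraph V)
    (hiso : ∀ x : V, (G.neighborSet x).Nonempty)
    (heqv : ∀ ⦃x y : V⦄, G.Adj x y →
      G.neighborSet x ∪ {x} ≠ G.neighborSet y ∪ {y})
    {k : ℕ} (C : Fin k → Finset V) (hC : IsEdgeCliqueCover G C) :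
    degeneracy G + indepNum G < 2 ^ k := by
  classical
  obtain ⟨hclique, hcover⟩ := hC
  set L : V → Finset (Fin k) := fun v => Finset.univ.filter (fun l => v ∈ C l) with hLdef
  have hmemL : ∀ v l, l ∈ L v ↔ v ∈ C l := by intro v l; simp [hLdef]
  have hLne : ∀ v, (L v).Nonempty := by
    intro v
    obtain ⟨w, hw⟩ := hiso v
    obtain ⟨l, hvl, _⟩ := hcover hw
    exact ⟨l, (hmemL v l).2 hvl⟩
  have hadj : ∀ x y : V, G.Adj x y ↔ x ≠ y ∧ ∃ l, l ∈ L x ∧ l ∈ L y := by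
    intro x y
    constructor
    · intro h
      refine ⟨h.ne, ?_⟩
      obtain ⟨l, hx, hy⟩ := hcover h
      exact ⟨l, (hmemL x l).2 hx, (hmemL y l).2 hy⟩
    · rintro ⟨hne, l, hx, hy⟩
      exact hclique l ((hmemL x l).1 hx) ((hmemL y l).1 hy) hne
  have hLinj : Function.Injective L := by
    intro x y hxy
    by_contra hne
    have hadjxy : G.Adj x y := by
      obtain ⟨l, hl⟩ := hLne x
      exact (hadj x y).2 ⟨hne, l, hl, hxy ▸ hl⟩
    apply heqv hadjxy
    ext z
    simp only [Set.mem_union, Set.mem_singleton_iff, SimpleGraph.mem_neighborSet]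
    constructor
    · rintro (hz | rfl)
      · rcases eq_or_ne z y with rfl | hzy
        · exact Or.inr rfl
        · obtain ⟨_, l, hlx, hlz⟩ := (hadj x z).1 hz
          exact Or.inl ((hadj y z).2 ⟨hzy.symm, l, hxy ▸ hlx, hlz⟩)
      · exact Or.inl hadjxy.symm
    · rintro (hz | rfl)
      · rcases eq_or_ne z x with rfl | hzx
        · exact Or.inr rfl
        · obtain ⟨_, l, hly, hlz⟩ := (hadj y z).1 hz
          exact Or.inl ((hadj x z).2 ⟨hzx.symm, l, hxy ▸ hly, hlz⟩)
      · exact Or.inl hadjxy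
  have halpha : indepNum G ≤ k := by
    have h0 : 0 ∈ {n : ℕ | ∃ s : Finset V, s.card = n ∧
        (s : Set V).Pairwise (fun x y => ¬ G.Adj x y)} := ⟨∅, by simp⟩
    apply csSup_le ⟨0, h0⟩
    rintro n ⟨s, rfl, hs⟩
    have hdisj : ∀ x ∈ s, ∀ y ∈ s, x ≠ y → Disjoint (L x) (L y) := by
      intro x hx y hy hne
      rw [Finset.disjoint_left]
      intro l hlx hly
      exact hs (Finset.mem_coe.2 hx) (Finset.mem_coe.2 hy) hne
        ((hadj x y).2 ⟨hne, l, hlx, hly⟩)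
    calc s.card = ∑ _x ∈ s, 1 := by simp
      _ ≤ ∑ x ∈ s, (L x).card := Finset.sum_le_sum fun x _ => (hLne x).card_pos
      _ = (s.biUnion L).card := (Finset.card_biUnion hdisj).symm
      _ ≤ Fintype.card (Fin k) := Finset.card_le_univ _
      _ = k := Fintype.card_fin k
  have hdeg : degeneracy G ≤ 2 ^ k - (k + 1) := by
    apply Nat.sInf_le
    simp only [Set.mem_setOf_eq]
    intro S hS
    obtain ⟨v, hvS, hvmin⟩ := S.exists_min_image (fun u => (L u).card) hS
    refine ⟨v, hvS, ?_⟩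
    have hset : (S : Set V) ∩ G.neighborSet v = ↑(S.filter fun u => G.Adj v u) := by
      ext u
      simp [SimpleGraph.mem_neighborSet]
    rw [hset, Set.ncard_coe_finset]
    set t := (L v).card with htdef
    have ht1 : 1 ≤ t := (hLne v).card_pos
    have htk : t ≤ k := le_trans (Finset.card_le_univ _) (by simp)
    set F : Finset (Finset (Fin k)) :=
      (L v)ᶜ.powerset ∪ (L v).image (fun i => ({i} : Finset (Fin k))) with hFdef
    have hdisjF : Disjoint ((L v)ᶜ.powerset) ((L v).image (fun i => ({i} : Finset (Fin k)))) := by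
      rw [Finset.disjoint_left]
      rintro B hB hB'
      obtain ⟨i, hi, rfl⟩ := Finset.mem_image.1 hB'
      have : i ∈ (L v)ᶜ := Finset.mem_powerset.1 hB (Finset.mem_singleton_self i)
      exact (Finset.mem_compl.1 this) hi
    have hFcard : F.card = 2 ^ (k - t) + t := by
      rw [hFdef, Finset.card_union_of_disjoint hdisjF, Finset.card_powerset,
        Finset.card_compl, Finset.card_image_of_injective _ Finset.singleton_injective]
      simp [htdef]
    have himg : ((S.filter fun u => G.Adj v u).image L) ⊆ Fᶜ := by
      intro B hB
      obtain ⟨u, hu, rfl⟩ := Finset.mem_image.1 hB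
      obtain ⟨huS, hadjvu⟩ := Finset.mem_filter.1 hu
      rw [Finset.mem_compl]
      intro hF
      obtain ⟨hne, l, hlv, hlu⟩ := (hadj v u).1 hadjvu
      rcases Finset.mem_union.1 hF with h | h
      · exact Finset.mem_compl.1 (Finset.mem_powerset.1 h hlu) hlv
      · obtain ⟨i, hi, hieq⟩ := Finset.mem_image.1 h
        have hl : l = i := by
          have := hieq ▸ hlu
          exact Finset.mem_singleton.1 this
        have ht1' : t ≤ 1 := by
          have := hvmin u huS
          rw [← hieq] at this
          simpa using this
        have hLv : L v = {i} := by
          have hcard1 : (L v).card = 1 := le_antisymm ht1' ht1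
          obtain ⟨j, hj⟩ := Finset.card_eq_one.1 hcard1
          rw [hj] at hlv ⊢
          rw [Finset.mem_singleton] at hlv
          rw [← hlv, hl]
        have : u = v := hLinj (by rw [← hieq, hLv])
        exact hne this.symm
    have hcard1 : (S.filter fun u => G.Adj v u).card + F.card ≤ 2 ^ k := by
      calc (S.filter fun u => G.Adj v u).card + F.card
          = ((S.filter fun u => G.Adj v u).image L).card + F.card := by
            rw [Finset.card_image_of_injective _ hLinj]
        _ ≤ Fᶜ.card + F.card := by
            exact Nat.add_le_add_right (Finset.card_le_card himg) _
        _ = Fintype.card (Finset (Fin k)) := Finset.card_compl_add_card F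
        _ = 2 ^ k := by simp [Fintype.card_finset]
    have hFbig : k + 1 ≤ F.card := by
      have h2 : k - t < 2 ^ (k - t) := Nat.lt_two_pow_self (n := _)
      omega
    omega
  have hk2 : k < 2 ^ k := Nat.lt_two_pow_self (n := k)
  omega
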